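/- arXiv:2203.02566 — 3 statements merged into one kernel-verified Lean document; each statement's English description precedes it below -/
import Mathlib

section
/- Suppose p is an odd prime. Every virtually cyclic subgroup V of Γ = ℤⁿ ⋊_ρ ℤ/p (i.e., every subgroup containing a cyclic subgroup of finite index) is isomorphic as a group to one of: the trivial group, ℤ/p, ℤ, or ℤ × ℤ/p. -/
/-- The monoid homomorphism sending an additive automorphism of `A` to the corresponding
multiplicative automorphism of `Multiplicative A`. -/
def addAutToMulAut {A : Type*} [AddGroup A] : Multiplicative (AddAut A) →* MulAut (Multiplicative A) where
  toFun e := AddEquiv.toMultiplicative (Multiplicative.toAdd e)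
  map_one' := rfl
  map_mul' _ _ := rfl

/-- The semidirect product `Γ = ℤⁿ ⋊_ρ ℤ/p` (written multiplicatively), with multiplication
`(x,g)·(x',g') = (x + ρ(g)x', g+g')`. -/
abbrev Gam (p n : ℕ) (ρ : Multiplicative (ZMod p) →* Multiplicative (AddAut (Fin n → ℤ))) : Type :=
  (Multiplicative (Fin n → ℤ)) ⋊[addAutToMulAut.comp ρ] (Multiplicative (ZMod p))


section aux

open SemidirectProduct
variable {p n : ℕ} {ρ : Multiplicative (ZMod p) →* Multiplicative (AddAut (Fin n → ℤ))}

lemma gam_comm_of_right_one (a b : Gam p n ρ) (ha : a.right = 1) (hb : b.right = 1) :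
    a * b = b * a := by
  ext
  · simp [ha, hb, mul_comm]
  · simp [ha, hb]

lemma gam_eq_inl (a : Gam p n ρ) (ha : a.right = 1) : a = inl a.left := by
  ext <;> simp [ha]

lemma gam_right_eq (a : Gam p n ρ) : rightHom a = a.right := rfl

lemma gam_zpow_eq (x : Gam p n ρ) (hx : x.right = 1) (a : ℤ) : x ^ a = inl (x.left ^ a) := by
  rw [gam_eq_inl x hx]; exact (map_zpow (inl : _ →* Gam p n ρ) x.left a).symm

lemma gam_pow_eq (x : Gam p n ρ) (hx : x.right = 1) (a : ℕ) : x ^ a = inl (x.left ^ a) := by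
  rw [gam_eq_inl x hx]; exact (map_pow (inl : _ →* Gam p n ρ) x.left a).symm

lemma mult_pi_torsionfree (a : Multiplicative (Fin n → ℤ)) (m : ℤ) (hm : m ≠ 0)
    (h : a ^ m = 1) : a = 1 := by
  have h2 : m • Multiplicative.toAdd a = 0 := by
    simpa using congrArg Multiplicative.toAdd h
  rcases smul_eq_zero.mp h2 with h3 | h3
  · exact absurd h3 hm
  · exact Multiplicative.toAdd.injective (by simpa using h3)

lemma zmod_pow_p (q : Multiplicative (ZMod p)) : q ^ p = 1 := by
  apply Multiplicative.toAdd.injective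
  simp [nsmul_eq_mul, ZMod.natCast_self]

lemma gam_ker_cases [hp : Fact p.Prime] (V : Subgroup (Gam p n ρ))
    (hV : ∃ C : Subgroup V, IsCyclic C ∧ C.FiniteIndex) :
    (∀ x ∈ V, x.right = 1 → x = 1) ∨
    ∃ c : Gam p n ρ, c ∈ V ∧ c.right = 1 ∧ (∀ a : ℤ, c ^ a = 1 → a = 0) ∧
      (∀ x ∈ V, x.right = 1 → ∃ a : ℤ, x = c ^ a) := by
  obtain ⟨C, hcyc, hfin⟩ := hV
  obtain ⟨v, hv⟩ := hcyc.exists_generator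
  set c₀ : Gam p n ρ := ((v : V) : Gam p n ρ) with hc₀
  have hppos : 0 < p := hp.out.pos
  -- every element of V has a positive power landing in zpowers (c₀ ^ p)
  have hgen : ∀ x ∈ V, ∃ (m : ℕ) (k : ℤ), 0 < m ∧ x ^ (m * p) = (c₀ ^ p) ^ k := by
    intro x hx
    set x' : V := ⟨x, hx⟩ with hx'
    haveI := hfin
    obtain ⟨i, j, hne, heq⟩ :=
      Finite.exists_ne_map_eq_of_infinite (fun m : ℕ => ((x' ^ m : V) : V ⧸ C))
    have hkey : ∀ i j : ℕ, i < j → ((x' ^ i : V) : V ⧸ C) = ((x' ^ j : V) : V ⧸ C) →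
        ∃ (m : ℕ) (k : ℤ), 0 < m ∧ x ^ (m * p) = (c₀ ^ p) ^ k := by
      intro i j hij heq
      have hmem : x' ^ (j - i) ∈ C := by
        have h1 : (x' ^ i)⁻¹ * x' ^ j ∈ C := (QuotientGroup.eq).mp heq
        have h2 : (x' ^ i)⁻¹ * x' ^ j = x' ^ (j - i) := by
          rw [inv_mul_eq_iff_eq_mul, ← pow_add, Nat.add_sub_cancel' hij.le]
        rw [← h2]; exact h1
      obtain ⟨k, hk⟩ := Subgroup.mem_zpowers_iff.mp (hv ⟨x' ^ (j - i), hmem⟩)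
      have hk' : c₀ ^ k = x ^ (j - i) := by
        have := congrArg (fun z : C => ((z : V) : Gam p n ρ)) hk
        simpa [hc₀, hx'] using this
      refine ⟨j - i, k, Nat.sub_pos_of_lt hij, ?_⟩
      calc x ^ ((j - i) * p) = (x ^ (j - i)) ^ p := by rw [pow_mul]
        _ = (c₀ ^ k) ^ p := by rw [hk']
        _ = (c₀ ^ p) ^ k := by
            rw [← zpow_natCast (c₀ ^ k) p, ← zpow_mul, mul_comm, zpow_mul, zpow_natCast]
    rcases hne.lt_or_gt with h | h
    · exact hkey i j h heq
    · exact hkey j i h heq.symm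
  set c : Gam p n ρ := c₀ ^ p with hc
  have hcV : c ∈ V := V.pow_mem (v : V).2 p
  have hcright : c.right = 1 := by
    rw [← gam_right_eq, hc, map_pow, gam_right_eq]
    exact zmod_pow_p _
  by_cases hd : c.left = 1
  · left
    intro x hxV hxr
    have hc1 : c = 1 := by rw [gam_eq_inl c hcright, hd, map_one]
    obtain ⟨m, k, hm0, hmk⟩ := hgen x hxV
    rw [hc1, one_zpow] at hmk
    have hxl : x.left ^ (m * p) = 1 := by
      rw [gam_pow_eq x hxr] at hmk
      have := inl_injective (hmk.trans (map_one (inl : _ →* Gam p n ρ)).symm)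
      simpa using this
    have : x.left = 1 := by
      apply mult_pi_torsionfree x.left ((m * p : ℕ) : ℤ)
        (by exact_mod_cast Nat.mul_ne_zero hm0.ne' hppos.ne')
      rw [zpow_natCast]; exact hxl
    rw [gam_eq_inl x hxr, this, map_one]
  · right
    have hd' : Multiplicative.toAdd c.left ≠ 0 := fun h => hd (Multiplicative.toAdd.injective (by simpa using h))
    obtain ⟨i, hi0⟩ := Function.ne_iff.mp hd'
    have hi : Multiplicative.toAdd c.left i ≠ 0 := by simpa using hi0
    -- the subgroup of values of coordinate i
    set S : AddSubgroup ℤ :=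
      { carrier := {z | ∃ x : Gam p n ρ, x ∈ V ∧ x.right = 1 ∧ Multiplicative.toAdd x.left i = z}
        zero_mem' := ⟨1, V.one_mem, rfl, by simp⟩
        add_mem' := by
          rintro z w ⟨x, hxV, hxr, rfl⟩ ⟨y, hyV, hyr, rfl⟩
          exact ⟨x * y, V.mul_mem hxV hyV, by simp [hxr, hyr], by simp [hxr]⟩
        neg_mem' := by
          rintro z ⟨x, hxV, hxr, rfl⟩
          exact ⟨x⁻¹, V.inv_mem hxV, by simp [hxr], by simp [hxr]⟩ } with hS
    obtain ⟨g, hg⟩ := Int.subgroup_cyclic S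
    have hgS : g ∈ S := by
      rw [hg]; exact AddSubgroup.mem_closure_singleton.mpr ⟨1, one_smul _ _⟩
    obtain ⟨x₀, hx₀V, hx₀r, hx₀val⟩ := hgS
    have hinj0 : ∀ x, x ∈ V → x.right = 1 → Multiplicative.toAdd x.left i = 0 → x = 1 := by
      intro x hxV hxr h0
      obtain ⟨m, k, hm0, hmk⟩ := hgen x hxV
      rw [gam_pow_eq x hxr, gam_zpow_eq c hcright] at hmk
      have hleft : x.left ^ (m * p) = c.left ^ k := inl_injective hmk
      have h2 := congrArg (fun a => (Multiplicative.toAdd a) i) hleft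
      simp only [toAdd_pow, toAdd_zpow, Pi.smul_apply, smul_eq_mul] at h2
      rw [h0, smul_zero] at h2
      have hk0 : k = 0 := by
        rcases mul_eq_zero.mp h2.symm with h | h
        · exact h
        · exact absurd h hi
      rw [hk0, zpow_zero] at hleft
      have hx1 : x.left = 1 := by
        apply mult_pi_torsionfree x.left ((m * p : ℕ) : ℤ)
          (by exact_mod_cast Nat.mul_ne_zero hm0.ne' hppos.ne')
        rw [zpow_natCast]; exact hleft
      rw [gam_eq_inl x hxr, hx1, map_one]
    have hg0 : g ≠ 0 := by
      intro h
      have hcS : Multiplicative.toAdd c.left i ∈ S := ⟨c, hcV, hcright, rfl⟩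
      rw [hg, h] at hcS
      obtain ⟨a, ha⟩ := AddSubgroup.mem_closure_singleton.mp hcS
      rw [smul_zero] at ha
      exact hi ha.symm
    have hx₀pow : ∀ a : ℤ, (x₀ ^ a).right = 1 ∧ Multiplicative.toAdd (x₀ ^ a).left i = a * g := by
      intro a
      constructor
      · rw [← gam_right_eq, map_zpow, gam_right_eq, hx₀r, one_zpow]
      · rw [gam_zpow_eq x₀ hx₀r, left_inl, toAdd_zpow, Pi.smul_apply, hx₀val, smul_eq_mul]
    refine ⟨x₀, hx₀V, hx₀r, ?_, ?_⟩
    · intro a ha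
      have h2 := congrArg (fun z : Gam p n ρ => (Multiplicative.toAdd z.left) i) ha
      simp only [(hx₀pow a).2] at h2
      have : a * g = 0 := by simpa using h2
      rcases mul_eq_zero.mp this with h | h
      · exact h
      · exact absurd h hg0
    · intro x hxV hxr
      have hxS : Multiplicative.toAdd x.left i ∈ S := ⟨x, hxV, hxr, rfl⟩
      rw [hg] at hxS
      obtain ⟨a, ha⟩ := AddSubgroup.mem_closure_singleton.mp hxS
      refine ⟨a, ?_⟩
      have hxa : x * (x₀ ^ a)⁻¹ = 1 := by
        apply hinj0 _ (V.mul_mem hxV (V.inv_mem (V.zpow_mem hx₀V a)))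
        · simp [(hx₀pow a).1, hxr]
        · have h1 : (x * (x₀ ^ a)⁻¹).left = x.left * (x₀ ^ a).left⁻¹ := by
            simp [hxr, (hx₀pow a).1]
          rw [h1]
          simp only [toAdd_mul, toAdd_inv, Pi.add_apply, Pi.neg_apply]
          rw [(hx₀pow a).2, ← ha]
          simp [smul_eq_mul]
      rw [← mul_inv_eq_one]
      exact hxa

lemma gam_commute [hp : Fact p.Prime] (hodd : Odd p) (V : Subgroup (Gam p n ρ))
    (c : Gam p n ρ) (hcV : c ∈ V) (hcr : c.right = 1) (hc0 : ∀ a : ℤ, c ^ a = 1 → a = 0)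
    (hgenV : ∀ x ∈ V, x.right = 1 → ∃ a : ℤ, x = c ^ a)
    (t : Gam p n ρ) (htV : t ∈ V) : t * c = c * t := by
  have hinj : ∀ a b : ℤ, c ^ a = c ^ b → a = b := by
    intro a b h
    have : c ^ (a - b) = 1 := by rw [zpow_sub, h, mul_inv_cancel]
    have := hc0 _ this
    omega
  have key : ∀ s : Gam p n ρ, s ∈ V → ∃ k : ℤ, s * c * s⁻¹ = c ^ k := by
    intro s hs
    refine hgenV _ (V.mul_mem (V.mul_mem hs hcV) (V.inv_mem hs)) ?_
    have : rightHom (s * c * s⁻¹) = 1 := by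
      rw [map_mul, map_mul, map_inv, gam_right_eq c, hcr, mul_one, mul_inv_cancel]
    rwa [gam_right_eq] at this
  obtain ⟨k, hk⟩ := key t htV
  obtain ⟨j, hj⟩ := key t⁻¹ (V.inv_mem htV)
  have hσk : (MulAut.conj t) c = c ^ k := by rw [MulAut.conj_apply]; exact hk
  have hσj : (MulAut.conj t)⁻¹ c = c ^ j := by
    rw [← map_inv (MulAut.conj : Gam p n ρ →* MulAut (Gam p n ρ)) t, MulAut.conj_apply]
    exact hj
  have hjk : j * k = 1 := by
    have h1 : c = ((MulAut.conj t)⁻¹) ((MulAut.conj t) c) := by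
      rw [← MulAut.mul_apply, inv_mul_cancel, MulAut.one_apply]
    rw [hσk, map_zpow, hσj, ← zpow_mul] at h1
    exact (hinj 1 (j * k) (by rw [zpow_one]; exact h1)).symm
  have hku : k = 1 ∨ k = -1 :=
    Int.isUnit_iff.mp (IsUnit.of_mul_eq_one (a := k) j (by rw [mul_comm]; exact hjk))
  have hpow : ∀ e : ℕ, ((MulAut.conj t) ^ e) c = c ^ (k ^ e) := by
    intro e
    induction e with
    | zero => simp
    | succ e ih =>
      have hstep : ((MulAut.conj t) ^ (e + 1)) c = (MulAut.conj t) (((MulAut.conj t) ^ e) c) := by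
        rw [pow_succ' (MulAut.conj t) e, MulAut.mul_apply]
      rw [hstep, ih, map_zpow, hσk, ← zpow_mul, ← pow_succ']
  have hp1 : ((MulAut.conj t) ^ p) c = c := by
    rw [← map_pow (MulAut.conj : Gam p n ρ →* MulAut (Gam p n ρ)) t p, MulAut.conj_apply]
    have htp : (t ^ p).right = 1 := by
      rw [← gam_right_eq, map_pow, gam_right_eq]; exact zmod_pow_p _
    rw [gam_comm_of_right_one (t ^ p) c htp hcr, mul_inv_cancel_right]
  have hkp : k ^ p = 1 := by
    have := (hpow p).symm.trans hp1
    have := hinj (k ^ p) 1 (by rw [zpow_one]; exact this)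
    exact this
  have hk1 : k = 1 := by
    rcases hku with h | h
    · exact h
    · rw [h, Odd.neg_one_pow hodd] at hkp; omega
  rw [hk1, zpow_one] at hk
  rwa [mul_inv_eq_iff_eq_mul] at hk

lemma gam_iso_int (V : Subgroup (Gam p n ρ)) (s : Gam p n ρ) (hsV : s ∈ V)
    (hs0 : ∀ a : ℤ, s ^ a = 1 → a = 0) (hgen : ∀ v ∈ V, ∃ a : ℤ, v = s ^ a) :
    Nonempty (V ≃* Multiplicative ℤ) := by
  set sV : V := ⟨s, hsV⟩ with hsVdef
  have hbij : Function.Bijective (zpowersHom V sV) := by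
    constructor
    · intro a b hab
      have : s ^ (Multiplicative.toAdd a) = s ^ (Multiplicative.toAdd b) := by
        have := congrArg (fun z : V => (z : Gam p n ρ)) hab
        simpa [zpowersHom_apply] using this
      have h0 : s ^ (Multiplicative.toAdd a - Multiplicative.toAdd b) = 1 := by
        rw [zpow_sub, this, mul_inv_cancel]
      have := hs0 _ h0
      have : Multiplicative.toAdd a = Multiplicative.toAdd b := by omega
      exact Multiplicative.toAdd.injective this
    · intro v
      obtain ⟨a, ha⟩ := hgen (v : Gam p n ρ) v.2
      refine ⟨Multiplicative.ofAdd a, ?_⟩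
      apply Subtype.ext
      simp [zpowersHom_apply, ← ha]
      exact ha.symm
  exact ⟨(MulEquiv.ofBijective (zpowersHom V sV) hbij).symm⟩

lemma zmod_ofAdd_pow [hp : Fact p.Prime] (m : ℕ) :
    (Multiplicative.ofAdd (1 : ZMod p)) ^ m = Multiplicative.ofAdd ((m : ZMod p)) := by
  apply Multiplicative.toAdd.injective
  simp [nsmul_eq_mul]

lemma zmod_ofAdd_zpow [hp : Fact p.Prime] (m : ℤ) :
    (Multiplicative.ofAdd (1 : ZMod p)) ^ m = Multiplicative.ofAdd ((m : ZMod p)) := by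
  apply Multiplicative.toAdd.injective
  simp [zsmul_eq_mul]

lemma gam_exists_t [hp : Fact p.Prime] (V : Subgroup (Gam p n ρ)) (x : Gam p n ρ)
    (hxV : x ∈ V) (hxr : x.right ≠ 1) :
    ∃ t ∈ V, t.right = Multiplicative.ofAdd (1 : ZMod p) := by
  haveI : NeZero p := ⟨hp.out.ne_zero⟩
  set q := Multiplicative.toAdd x.right with hq
  have hq0 : q ≠ 0 := fun h => hxr (Multiplicative.toAdd.injective (by simpa [hq] using h))
  refine ⟨x ^ (q⁻¹.val), V.pow_mem hxV _, ?_⟩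
  have : (x ^ q⁻¹.val).right = x.right ^ q⁻¹.val := by
    rw [← gam_right_eq, map_pow, gam_right_eq]
  rw [this]
  apply Multiplicative.toAdd.injective
  simp only [toAdd_pow, toAdd_ofAdd, ← hq]
  rw [nsmul_eq_mul, ZMod.natCast_val, ZMod.cast_id]
  exact inv_mul_cancel₀ hq0

lemma gam_iso_zmod [hp : Fact p.Prime] (V : Subgroup (Gam p n ρ))
    (hK : ∀ x ∈ V, x.right = 1 → x = 1)
    (t : Gam p n ρ) (htV : t ∈ V) (htr : t.right = Multiplicative.ofAdd (1 : ZMod p)) :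
    Nonempty (V ≃* Multiplicative (ZMod p)) := by
  haveI : NeZero p := ⟨hp.out.ne_zero⟩
  set χ : V →* Multiplicative (ZMod p) := (rightHom).comp V.subtype with hχ
  have hinj : Function.Injective χ := by
    rw [injective_iff_map_eq_one]
    intro v hv1
    exact Subtype.ext (hK v v.2 (by rw [← gam_right_eq]; exact hv1))
  have hsurj : Function.Surjective χ := by
    intro w
    refine ⟨⟨t, htV⟩ ^ (Multiplicative.toAdd w).val, ?_⟩
    rw [map_pow]
    have h1 : χ ⟨t, htV⟩ = Multiplicative.ofAdd (1 : ZMod p) := by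
      rw [hχ]; exact htr
    rw [h1, zmod_ofAdd_pow, ZMod.natCast_val, ZMod.cast_id]
    simp
  exact ⟨MulEquiv.ofBijective χ ⟨hinj, hsurj⟩⟩

end aux

open SemidirectProduct

/-- for `p` an odd prime, every virtually cyclic subgroup of `Γ = ℤⁿ ⋊_ρ ℤ/p`
is isomorphic to the trivial group, `ℤ/p`, `ℤ`, or `ℤ × ℤ/p`. -/
theorem stmt3 (p n : ℕ) [Fact p.Prime] (hodd : Odd p)
    (ρ : Multiplicative (ZMod p) →* Multiplicative (AddAut (Fin n → ℤ)))
    (V : Subgroup (Gam p n ρ))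
    (hV : ∃ C : Subgroup V, IsCyclic C ∧ C.FiniteIndex) :
    V = ⊥ ∨ Nonempty (V ≃* Multiplicative (ZMod p)) ∨ Nonempty (V ≃* Multiplicative ℤ) ∨
      Nonempty (V ≃* Multiplicative (ℤ × ZMod p)) := by
  haveI hp : Fact p.Prime := inferInstance
  haveI : NeZero p := ⟨hp.out.ne_zero⟩
  rcases gam_ker_cases V hV with hK | ⟨c, hcV, hcr, hc0, hgenV⟩
  · by_cases hQ : ∀ x ∈ V, x.right = 1
    · left
      rw [Subgroup.eq_bot_iff_forall]
      intro x hx; exact hK x hx (hQ x hx)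
    · push_neg at hQ
      obtain ⟨x, hxV, hxr⟩ := hQ
      obtain ⟨t, htV, htr⟩ := gam_exists_t V x hxV hxr
      exact Or.inr (Or.inl (gam_iso_zmod V hK t htV htr))
  · by_cases hQ : ∀ x ∈ V, x.right = 1
    · exact Or.inr (Or.inr (Or.inl
        (gam_iso_int V c hcV hc0 (fun v hv => hgenV v hv (hQ v hv)))))
    · push_neg at hQ
      obtain ⟨x, hxV, hxr⟩ := hQ
      obtain ⟨t, htV, htr⟩ := gam_exists_t V x hxV hxr
      have hCtc : Commute t c := gam_commute hodd V c hcV hcr hc0 hgenV t htV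
      have htpr : (t ^ p).right = 1 := by
        rw [← gam_right_eq, map_pow, gam_right_eq]; exact zmod_pow_p _
      obtain ⟨m, htp⟩ := hgenV (t ^ p) (V.pow_mem htV p) htpr
      by_cases hdvd : (p : ℤ) ∣ m
      · -- V ≃ ℤ × ZMod p
        obtain ⟨m', rfl⟩ := hdvd
        set t₁ : Gam p n ρ := t * c ^ (-m') with ht₁
        have ht₁V : t₁ ∈ V := V.mul_mem htV (V.zpow_mem hcV _)
        have ht₁r : t₁.right = Multiplicative.ofAdd (1 : ZMod p) := by
          rw [← gam_right_eq, map_mul, map_zpow, gam_right_eq c, hcr, one_zpow, mul_one,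
            gam_right_eq, htr]
        have hCt₁c : Commute t₁ c := Commute.mul_left hCtc ((Commute.refl c).zpow_left (-m'))
        have ht₁p : t₁ ^ p = 1 := by
          have h1 : Commute t (c ^ (-m')) := hCtc.zpow_right (-m')
          rw [ht₁, h1.mul_pow, htp, ← zpow_natCast (c ^ (-m')) p, ← zpow_mul, ← zpow_add]
          have h2 : (p : ℤ) * m' + -m' * (p : ℤ) = 0 := by ring
          rw [h2, zpow_zero]
        set cV : V := ⟨c, hcV⟩ with hcVdef
        set tV : V := ⟨t₁, ht₁V⟩ with htVdef
        have hCV : Commute cV tV := Subtype.ext hCt₁c.eq.symm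
        have htVp : tV ^ p = 1 := by
          apply Subtype.ext
          rw [SubmonoidClass.coe_pow]
          exact ht₁p
        have hord : orderOf tV ∣ p := orderOf_dvd_of_pow_eq_one htVp
        have hval : ∀ b b' : ZMod p, tV ^ ((b + b').val) = tV ^ (b.val + b'.val) := by
          intro b b'
          apply pow_eq_pow_iff_modEq.mpr
          apply Nat.ModEq.of_dvd hord
          rw [ZMod.val_add]
          exact Nat.mod_modEq _ p
        set f : Multiplicative (ℤ × ZMod p) →* V := MonoidHom.mk'
          (fun q => cV ^ ((Multiplicative.toAdd q).1) * tV ^ ((Multiplicative.toAdd q).2.val))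
          (by
            intro q r
            simp only [toAdd_mul, Prod.fst_add, Prod.snd_add]
            rw [zpow_add, hval, pow_add]
            have hc1 : Commute (tV ^ ((Multiplicative.toAdd q).2.val))
                (cV ^ ((Multiplicative.toAdd r).1)) := (hCV.symm.pow_left _).zpow_right _
            exact (hc1.mul_mul_mul_comm _ _).symm) with hf
        have hfcoe : ∀ q : Multiplicative (ℤ × ZMod p),
            ((f q : V) : Gam p n ρ) = c ^ ((Multiplicative.toAdd q).1)
              * t₁ ^ ((Multiplicative.toAdd q).2.val) := by
          intro q; rfl
        have hrf : ∀ q : Multiplicative (ℤ × ZMod p),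
            rightHom ((f q : V) : Gam p n ρ) = Multiplicative.ofAdd ((Multiplicative.toAdd q).2) := by
          intro q
          rw [hfcoe, map_mul, map_zpow, map_pow, gam_right_eq c, hcr, one_zpow, one_mul,
            gam_right_eq, ht₁r, zmod_ofAdd_pow, ZMod.natCast_val, ZMod.cast_id]
        have hinj : Function.Injective f := by
          rw [injective_iff_map_eq_one]
          intro q hq1
          have hb : (Multiplicative.toAdd q).2 = 0 := by
            have := hrf q
            rw [hq1] at this
            simpa using this.symm
          have ha : (Multiplicative.toAdd q).1 = 0 := by
            apply hc0
            have hco : ((f q : V) : Gam p n ρ) = 1 := by rw [hq1]; rfl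
            rw [hfcoe q, hb] at hco
            simpa using hco
          apply Multiplicative.toAdd.injective
          apply Prod.ext
          · simpa using ha
          · simpa using hb
        have hsurj : Function.Surjective f := by
          intro v
          set b := Multiplicative.toAdd (rightHom (v : Gam p n ρ)) with hb
          have hwV : (v : Gam p n ρ) * (t₁ ^ (b.val))⁻¹ ∈ V :=
            V.mul_mem v.2 (V.inv_mem (V.pow_mem ht₁V _))
          have hwr : ((v : Gam p n ρ) * (t₁ ^ (b.val))⁻¹).right = 1 := by
            rw [← gam_right_eq, map_mul, map_inv, map_pow, gam_right_eq t₁, ht₁r,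
              zmod_ofAdd_pow, ZMod.natCast_val, ZMod.cast_id, hb]
            simp
          obtain ⟨a, haw⟩ := hgenV _ hwV hwr
          refine ⟨Multiplicative.ofAdd (a, b), ?_⟩
          apply Subtype.ext
          rw [hfcoe]
          simp only [toAdd_ofAdd]
          rw [← haw, inv_mul_cancel_right]
        exact Or.inr (Or.inr (Or.inr ⟨(MulEquiv.ofBijective f ⟨hinj, hsurj⟩).symm⟩))
      · -- V ≃ ℤ
        have hcop : IsCoprime ((p : ℤ)) m :=
          (Prime.coprime_iff_not_dvd (Nat.prime_iff_prime_int.mp hp.out)).mpr hdvd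
        obtain ⟨x₁, y, hxy⟩ := hcop
        set s : Gam p n ρ := c ^ x₁ * t ^ y with hs
        have hsV : s ∈ V := V.mul_mem (V.zpow_mem hcV x₁) (V.zpow_mem htV y)
        have hsp : s ^ ((p : ℤ)) = c := by
          have h1 : Commute (c ^ x₁) (t ^ y) := (hCtc.symm).zpow_zpow x₁ y
          rw [hs, h1.mul_zpow, ← zpow_mul, ← zpow_mul]
          have h2 : t ^ (y * (p : ℤ)) = c ^ (m * y) := by
            rw [mul_comm y, zpow_mul, zpow_natCast, htp, ← zpow_mul]
          rw [h2, ← zpow_add]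
          have h3 : x₁ * (p : ℤ) + m * y = 1 := by linear_combination hxy
          rw [h3, zpow_one]
        have hs0 : ∀ a : ℤ, s ^ a = 1 → a = 0 := by
          intro a ha
          apply hc0 a
          calc c ^ a = (s ^ ((p : ℤ))) ^ a := by rw [hsp]
            _ = (s ^ a) ^ ((p : ℤ)) := by rw [← zpow_mul, mul_comm, zpow_mul]
            _ = 1 := by rw [ha, one_zpow]
        have hrs : rightHom s = Multiplicative.ofAdd ((y : ZMod p)) := by
          rw [hs, map_mul, map_zpow, map_zpow, gam_right_eq c, hcr, one_zpow, one_mul,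
            gam_right_eq t, htr, zmod_ofAdd_zpow]
        have hy0 : ((y : ZMod p)) ≠ 0 := by
          intro h
          have h1 : ((1 : ℤ) : ZMod p) = 0 := by
            rw [← hxy]
            push_cast
            rw [ZMod.natCast_self, h]
            ring
          simp at h1
        have hgens : ∀ v ∈ V, ∃ a : ℤ, v = s ^ a := by
          intro v hvV
          set q := Multiplicative.toAdd (rightHom v) with hq
          set jn : ℕ := (q * (y : ZMod p)⁻¹).val with hjn
          have hrsj : rightHom (s ^ ((jn : ℤ))) = rightHom v := by
            rw [map_zpow, hrs]
            apply Multiplicative.toAdd.injective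
            simp only [toAdd_zpow, toAdd_ofAdd]
            rw [zsmul_eq_mul, hjn]
            push_cast
            rw [ZMod.natCast_val, ZMod.cast_id, mul_assoc, inv_mul_cancel₀ hy0, mul_one, hq]
          have hwV : v * (s ^ ((jn : ℤ)))⁻¹ ∈ V :=
            V.mul_mem hvV (V.inv_mem (V.zpow_mem hsV _))
          have hwr : (v * (s ^ ((jn : ℤ)))⁻¹).right = 1 := by
            rw [← gam_right_eq, map_mul, map_inv, hrsj, mul_inv_cancel]
          obtain ⟨a, haw⟩ := hgenV _ hwV hwr
          refine ⟨(p : ℤ) * a + (jn : ℤ), ?_⟩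
          rw [zpow_add, zpow_mul, hsp, ← haw, inv_mul_cancel_right]
        exact Or.inr (Or.inr (Or.inl (gam_iso_int V s hsV hs0 hgens)))
end

section
/- Suppose p is an odd prime and V is an infinite virtually cyclic subgroup of Γ = ℤⁿ ⋊_ρ ℤ/p that contains an element of order p. Then every element (v,0) of V ∩ (ℤⁿ × {0}) satisfies ρ(g)v = v for all g ∈ ℤ/p, and V is isomorphic to ℤ × ℤ/p. -/
private theorem myIsCyclic_of_injective {G H : Type*} [Group G] [Group H] [IsCyclic H]
    (f : G →* H) (hf : Function.Injective f) : IsCyclic G :=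
  isCyclic_of_surjective (MonoidHom.ofInjective hf).symm (MonoidHom.ofInjective hf).symm.surjective

private theorem myIsCyclic_of_tf {G : Type*} [Group G]
    (hcomm : ∀ x y : G, x * y = y * x)
    (htf : ∀ (x : G) (k : ℕ), k ≠ 0 → x ^ k = 1 → x = 1)
    (C : Subgroup G) (hC : IsCyclic C) (hCi : C.FiniteIndex) : IsCyclic G := by
  haveI : C.Normal := ⟨fun x hx g => by
    rw [hcomm g x, mul_assoc, mul_inv_cancel, mul_one]; exact hx⟩
  have hm : C.index ≠ 0 := hCi.index_ne_zero
  let f : G →* C :=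
    { toFun := fun x => ⟨x ^ C.index, C.pow_index_mem x⟩,
      map_one' := by ext; simp,
      map_mul' := fun x y => by
        ext
        exact (show Commute x y from hcomm x y).mul_pow C.index }
  have hf : Function.Injective f := by
    rw [injective_iff_map_eq_one]
    intro a ha
    rw [Subtype.ext_iff] at ha
    exact htf a C.index hm ha
  exact myIsCyclic_of_injective f hf

open SemidirectProduct Multiplicative in
/-- for `p` an odd prime, if `V` is an infinite virtually cyclic subgroup of
`Γ = ℤⁿ ⋊_ρ ℤ/p` containing an element of order `p`, then every element `(v,0)` of
`V ∩ (ℤⁿ × {0})` satisfies `ρ(g)v = v` for all `g ∈ ℤ/p`, and `V ≅ ℤ × ℤ/p`. -/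
theorem stmt4 (p n : ℕ) [Fact p.Prime] (hodd : Odd p)
    (ρ : Multiplicative (ZMod p) →* Multiplicative (AddAut (Fin n → ℤ)))
    (V : Subgroup (Gam p n ρ)) (hinf : Infinite V)
    (hV : ∃ C : Subgroup V, IsCyclic C ∧ C.FiniteIndex)
    (htor : ∃ u ∈ V, orderOf u = p) :
    (∀ v : Fin n → ℤ,
        (⟨Multiplicative.ofAdd v, Multiplicative.ofAdd (0 : ZMod p)⟩ : Gam p n ρ) ∈ V →
        ∀ g : ZMod p, Multiplicative.toAdd (ρ (Multiplicative.ofAdd g)) v = v) ∧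
    Nonempty (V ≃* Multiplicative (ℤ × ZMod p)) := by
  obtain ⟨C, hCcyc, hCfi⟩ := hV
  obtain ⟨u, huV, huo⟩ := htor
  have hp : p.Prime := Fact.out
  have hp0 : p ≠ 0 := hp.ne_zero
  haveI : NeZero p := ⟨hp0⟩
  -- the kernel of rightHom
  set W : Subgroup (Gam p n ρ) := (rightHom : Gam p n ρ →* Multiplicative (ZMod p)).ker with hW
  have hWidx : W.index = p := by
    rw [hW, Subgroup.index_ker, MonoidHom.range_eq_top.mpr rightHom_surjective]
    rw [Nat.card_congr ((Subgroup.topEquiv).toEquiv.trans (toAdd (α := ZMod p)))]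
    exact Nat.card_zmod p
  haveI hWfi : W.FiniteIndex := ⟨by rw [hWidx]; exact hp0⟩
  haveI : (W.subgroupOf V).FiniteIndex := Subgroup.instFiniteIndex_subgroupOf W V
  -- every element with trivial right component is `inl` of its left component
  have hinl : ∀ x : Gam p n ρ, rightHom x = 1 → x = inl x.left := by
    intro x hx
    conv_lhs => rw [← inl_left_mul_inr_right x]
    rw [show x.right = 1 from hx, map_one, mul_one]
  -- torsion-freeness
  have htfΓ : ∀ x : Gam p n ρ, rightHom x = 1 → ∀ k : ℕ, k ≠ 0 → x ^ k = 1 → x = 1 := by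
    intro x hx k hk hxk
    rw [hinl x hx] at hxk ⊢
    rw [← map_pow] at hxk
    have h1 : x.left ^ k = 1 := inl_injective (by rw [hxk, map_one])
    have h2 : k • toAdd x.left = 0 := by
      rw [← toAdd_pow, h1]; rfl
    have h3 : toAdd x.left = 0 := by
      rcases smul_eq_zero.mp h2 with h | h
      · exact absurd h hk
      · exact h
    have : x.left = 1 := by
      rw [← ofAdd_toAdd x.left, h3]; rfl
    rw [this, map_one]
  -- W.subgroupOf V is infinite
  haveI hWVinf : Infinite (W.subgroupOf V) := by
    have hcard : Nat.card (W.subgroupOf V) * (W.subgroupOf V).index = Nat.card V :=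
      Subgroup.card_mul_index _
    have hv0 : Nat.card V = 0 := @Nat.card_eq_zero_of_infinite V hinf
    rw [hv0] at hcard
    have h0 : Nat.card (W.subgroupOf V) = 0 := by
      by_contra h
      exact Subgroup.FiniteIndex.index_ne_zero ((Nat.mul_eq_zero.mp hcard).resolve_left h)
    exact (Nat.card_eq_zero.mp h0).resolve_left (fun he => he.false 1)
  -- W.subgroupOf V is cyclic
  have hWVcyc : IsCyclic (W.subgroupOf V) := by
    apply myIsCyclic_of_tf ?_ ?_ (C.subgroupOf (W.subgroupOf V))
        (myIsCyclic_of_injective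
          (H := C)
          { toFun := fun d => ⟨(d : W.subgroupOf V), d.2⟩,
            map_one' := rfl,
            map_mul' := fun _ _ => rfl }
          (fun a b h => by
            apply Subtype.ext; apply Subtype.ext
            have h2 : (⟨((a : W.subgroupOf V) : V), a.2⟩ : C)
                = ⟨((b : W.subgroupOf V) : V), b.2⟩ := h
            exact congrArg (Subtype.val : C → V) h2))
        (Subgroup.instFiniteIndex_subgroupOf C _)
    · intro x y
      apply Subtype.ext; apply Subtype.ext
      have hx : ((x : V) : Gam p n ρ) = inl ((x : V) : Gam p n ρ).left := hinl _ x.2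
      have hy : ((y : V) : Gam p n ρ) = inl ((y : V) : Gam p n ρ).left := hinl _ y.2
      show ((x : V) : Gam p n ρ) * ((y : V) : Gam p n ρ)
        = ((y : V) : Gam p n ρ) * ((x : V) : Gam p n ρ)
      rw [hx, hy, ← map_mul, ← map_mul, mul_comm]
    · intro x k hk hxk
      apply Subtype.ext; apply Subtype.ext
      apply htfΓ _ x.2 k hk
      have := congrArg (fun z : W.subgroupOf V => ((z : V) : Gam p n ρ)) hxk
      simpa using this
  -- a generator of W.subgroupOf V
  obtain ⟨ζ, hζ⟩ := hWVcyc.exists_generator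
  set w : Gam p n ρ := ((ζ : V) : Gam p n ρ) with hwdef
  have hwV : w ∈ V := (ζ : V).2
  have hwr : rightHom w = 1 := ζ.2
  have hw : ∀ x : Gam p n ρ, x ∈ V → rightHom x = 1 → ∃ k : ℤ, x = w ^ k := by
    intro x hxV hx1
    have hmem : (⟨x, hxV⟩ : V) ∈ W.subgroupOf V :=
      Subgroup.mem_subgroupOf.mpr (MonoidHom.mem_ker.mpr hx1)
    obtain ⟨k, hk⟩ := Subgroup.mem_zpowers_iff.mp (hζ ⟨⟨x, hxV⟩, hmem⟩)
    refine ⟨k, ?_⟩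
    have := congrArg (fun z : W.subgroupOf V => ((z : V) : Gam p n ρ)) hk
    simpa using this.symm
  set c : Fin n → ℤ := toAdd w.left with hc
  have hwpow : ∀ k : ℤ, w ^ k = inl (ofAdd (k • c)) := by
    intro k
    rw [ofAdd_zsmul, hc, ofAdd_toAdd, map_zpow, ← hinl w hwr]
  have hc0 : c ≠ 0 := by
    intro h
    have hw1 : w = 1 := by
      have h1 : w.left = 1 := by
        rw [← ofAdd_toAdd w.left, ← hc, h]; rfl
      rw [hinl w hwr, h1, map_one]
    obtain ⟨x, hx⟩ := exists_ne (1 : W.subgroupOf V)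
    obtain ⟨k, hk⟩ := Subgroup.mem_zpowers_iff.mp (hζ x)
    apply hx
    have hζ1 : ζ = 1 := by
      apply Subtype.ext; apply Subtype.ext
      exact hw1
    rw [← hk, hζ1, one_zpow]
  -- facts about u
  have hg : u.right ≠ 1 := by
    intro h
    have hpow : u ^ p = 1 := by
      have h2 := pow_orderOf_eq_one u
      rwa [huo] at h2
    have h1 : u = 1 := htfΓ u h p hp0 hpow
    rw [h1, orderOf_one] at huo
    exact hp.one_lt.ne huo
  have hg₀ : toAdd u.right ≠ 0 := fun h => hg (by rw [← ofAdd_toAdd u.right, h]; rfl)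
  have hconj : ∀ y : Multiplicative (Fin n → ℤ),
      u * inl y * u⁻¹ = inl ((addAutToMulAut.comp ρ) u.right y) := by
    intro y
    calc u * inl y * u⁻¹
        = (inl u.left * inr u.right) * inl y * (inl u.left * inr u.right)⁻¹ := by
          rw [inl_left_mul_inr_right]
      _ = inl u.left * (inr u.right * inl y * (inr u.right)⁻¹) * (inl u.left)⁻¹ := by
          rw [mul_inv_rev]; group
      _ = inl u.left * inl ((addAutToMulAut.comp ρ) u.right y) * (inl u.left)⁻¹ := by
          rw [← map_inv, ← inl_aut]
      _ = inl (u.left * (addAutToMulAut.comp ρ) u.right y * u.left⁻¹) := by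
          rw [map_mul, map_mul, map_inv]
      _ = inl ((addAutToMulAut.comp ρ) u.right y) := by
          rw [mul_comm u.left, mul_inv_cancel_right]
  -- the action of u fixes c
  have hσc1 : ∃ k₁ : ℤ, toAdd (ρ u.right) c = k₁ • c := by
    have hxV : u * w * u⁻¹ ∈ V := mul_mem (mul_mem huV hwV) (inv_mem huV)
    have hx1 : rightHom (u * w * u⁻¹) = 1 := by
      rw [map_mul, map_mul, map_inv, hwr, mul_one, mul_inv_cancel]
    obtain ⟨k, hk⟩ := hw _ hxV hx1
    refine ⟨k, ?_⟩
    have h2 : u * w * u⁻¹ = inl ((addAutToMulAut.comp ρ) u.right w.left) := by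
      conv_lhs => rw [hinl w hwr]
      exact hconj w.left
    rw [h2, hwpow k] at hk
    have h3 := inl_injective hk
    have h4 := congrArg toAdd h3
    exact h4
  obtain ⟨k₁, hk₁⟩ := hσc1
  have hupow : u.right ^ p = 1 := by
    apply toAdd.injective
    rw [toAdd_pow, toAdd_one, nsmul_eq_mul, ZMod.natCast_self, zero_mul]
  have hσp : (ρ u.right) ^ p = 1 := by rw [← map_pow, hupow, map_one]
  have hiter : ∀ j : ℕ, toAdd ((ρ u.right) ^ j) c = k₁ ^ j • c := by
    intro j; induction j with
    | zero => simp
    | succ j ih =>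
      rw [pow_succ, toAdd_mul, AddAut.add_apply, hk₁, map_zsmul, ih, smul_smul, ← pow_succ']
  have hk₁p : k₁ ^ p = 1 := by
    have h5 : toAdd ((ρ u.right) ^ p) c = c := by rw [hσp]; rfl
    rw [hiter p] at h5
    have h6 : (k₁ ^ p - 1) • c = 0 := by rw [sub_smul, one_smul, h5, sub_self]
    rcases smul_eq_zero.mp h6 with h | h
    · exact sub_eq_zero.mp h
    · exact absurd h hc0
  have hk₁1 : k₁ = 1 := by
    rcases (pow_eq_one_iff_of_ne_zero hp0).mp hk₁p with h | ⟨h, he⟩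
    · exact h
    · exact absurd he (Nat.not_even_iff_odd.mpr hodd)
  rw [hk₁1, one_smul] at hk₁
  have hfixc : ∀ t : ℕ, toAdd ((ρ u.right) ^ t) c = c := by
    intro t; rw [hiter t, hk₁1, one_pow, one_smul]
  constructor
  · -- part 1
    intro v hv g
    obtain ⟨k, hk⟩ := hw ⟨ofAdd v, ofAdd 0⟩ hv rfl
    rw [hwpow k] at hk
    have hv' : v = k • c := by
      have := congrArg (fun z : Gam p n ρ => toAdd z.left) hk
      simpa using this
    have hgt : ofAdd g = u.right ^ (g * (toAdd u.right)⁻¹).val := by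
      apply toAdd.injective
      rw [toAdd_pow, toAdd_ofAdd, nsmul_eq_mul,
        show (((g * (toAdd u.right)⁻¹).val : ℕ) : ZMod p) = g * (toAdd u.right)⁻¹ from
          ZMod.natCast_rightInverse _,
        mul_assoc, inv_mul_cancel₀ hg₀, mul_one]
    rw [hv', hgt, map_pow, map_zsmul, hfixc]
  · -- part 2
    have hmod : ∀ m : ℕ, u ^ (m % p) = u ^ m := by
      intro m
      have h := pow_mod_orderOf u m
      rwa [huo] at h
    have h1 : u * w * u⁻¹ = w := by
      have h2 : (addAutToMulAut.comp ρ) u.right w.left = w.left := by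
        apply toAdd.injective
        exact hk₁
      conv_lhs => rw [hinl w hwr, hconj w.left, h2]
      exact (hinl w hwr).symm
    have hcw : Commute u w := mul_inv_eq_iff_eq_mul.mp h1
    have hmemΦ : ∀ x : ℤ × ZMod p, w ^ x.1 * u ^ x.2.val ∈ V :=
      fun x => mul_mem (zpow_mem hwV _) (pow_mem huV _)
    have hΦadd : ∀ x y : ℤ × ZMod p,
        w ^ (x.1 + y.1) * u ^ (x.2 + y.2).val
          = (w ^ x.1 * u ^ x.2.val) * (w ^ y.1 * u ^ y.2.val) := by
      intro x y
      have h1 : u ^ (x.2 + y.2).val = u ^ (x.2.val + y.2.val) := by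
        rw [ZMod.val_add, hmod]
      rw [zpow_add, h1, pow_add]
      exact ((hcw.symm.zpow_left y.1).pow_right x.2.val).mul_mul_mul_comm
        (w ^ x.1) (u ^ y.2.val)
    let Φ : Multiplicative (ℤ × ZMod p) →* Gam p n ρ :=
      MonoidHom.mk' (fun x => w ^ (toAdd x).1 * u ^ (toAdd x).2.val)
        (fun a b => hΦadd (toAdd a) (toAdd b))
    have hmem : ∀ x, Φ x ∈ V := fun x => hmemΦ (toAdd x)
    let Φ' : Multiplicative (ℤ × ZMod p) →* V := Φ.codRestrict V hmem
    have hinj : Function.Injective Φ' := by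
      rw [injective_iff_map_eq_one]
      intro a ha
      have ha' : w ^ (toAdd a).1 * u ^ (toAdd a).2.val = 1 := Subtype.ext_iff.mp ha
      have h1 : rightHom u ^ (toAdd a).2.val = 1 := by
        have h0 := congrArg rightHom ha'
        rwa [map_mul, map_one, map_zpow, map_pow, hwr, one_zpow, one_mul] at h0
      have h2 : (toAdd a).2 = 0 := by
        have h3 := congrArg toAdd h1
        rw [toAdd_pow, toAdd_one, nsmul_eq_mul,
          show ((((toAdd a).2.val : ℕ) : ZMod p)) = (toAdd a).2 from
            ZMod.natCast_rightInverse _] at h3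
        rcases mul_eq_zero.mp h3 with h | h
        · exact h
        · exact absurd h hg₀
      have h4 : w ^ (toAdd a).1 = 1 := by
        rw [h2] at ha'
        simpa [ZMod.val_zero] using ha'
      have h5 : (toAdd a).1 = 0 := by
        rw [hwpow] at h4
        have h6 : ofAdd ((toAdd a).1 • c) = 1 :=
          inl_injective (h4.trans (map_one inl).symm)
        have h7 : (toAdd a).1 • c = 0 := by
          have := congrArg toAdd h6
          simpa using this
        rcases smul_eq_zero.mp h7 with h | h
        · exact h
        · exact absurd h hc0
      have h8 : toAdd a = (0, 0) := Prod.ext h5 h2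
      calc a = ofAdd (toAdd a) := (ofAdd_toAdd a).symm
        _ = ofAdd ((0 : ℤ), (0 : ZMod p)) := by rw [h8]
        _ = 1 := rfl
    have hsurj : Function.Surjective Φ' := by
      intro y
      set s : ℕ := (toAdd (rightHom (y : Gam p n ρ)) * (toAdd u.right)⁻¹).val with hs
      have h7 : rightHom u ^ s = rightHom (y : Gam p n ρ) := by
        apply toAdd.injective
        show toAdd (u.right ^ s) = toAdd (rightHom (y : Gam p n ρ))
        rw [toAdd_pow, nsmul_eq_mul, hs,
          show (((toAdd (rightHom (y : Gam p n ρ)) * (toAdd u.right)⁻¹).val : ℕ) : ZMod p)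
              = toAdd (rightHom (y : Gam p n ρ)) * (toAdd u.right)⁻¹ from
            ZMod.natCast_rightInverse _,
          mul_assoc, inv_mul_cancel₀ hg₀, mul_one]
      have hs1 : rightHom ((y : Gam p n ρ) * (u ^ s)⁻¹) = 1 := by
        rw [map_mul, map_inv, map_pow, h7, mul_inv_cancel]
      obtain ⟨k, hk⟩ := hw _ (mul_mem y.2 (inv_mem (pow_mem huV s))) hs1
      refine ⟨ofAdd (k, (s : ZMod p)), ?_⟩
      apply Subtype.ext
      show w ^ k * u ^ (((s : ZMod p)).val) = (y : Gam p n ρ)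
      have h8 : u ^ (((s : ZMod p)).val) = u ^ s := by
        rw [ZMod.val_natCast, hmod]
      rw [h8, ← hk, inv_mul_cancel_right]
    exact ⟨(MulEquiv.ofBijective Φ' ⟨hinj, hsurj⟩).symm⟩
end

section
/- Fix a generator t of ℤ/p. The assignment sending x ∈ ker(Norm_t) to the cyclic subgroup of Γ = ℤⁿ ⋊_ρ ℤ/p generated by (x,t) induces a bijection from the quotient group ker(Norm_t)/im(1 − ρ(t)) to the set of conjugacy classes of subgroups of order p of Γ. -/
/-- The norm map `Norm_t : ℤⁿ → ℤⁿ`, `x ↦ Σ_{i=0}^{p−1} ρ(t)^i x`. -/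
noncomputable def gammaNormHom (p n : ℕ) (ρ : Multiplicative (ZMod p) →* Multiplicative (AddAut (Fin n → ℤ)))
    (t : ZMod p) : (Fin n → ℤ) →+ (Fin n → ℤ) :=
  ∑ i ∈ Finset.range p, (Multiplicative.toAdd ((ρ (Multiplicative.ofAdd t)) ^ i)).toAddMonoidHom

/-- The endomorphism `1 − ρ(t)` of `ℤⁿ`. -/
def oneSubHom (p n : ℕ) (ρ : Multiplicative (ZMod p) →* Multiplicative (AddAut (Fin n → ℤ)))
    (t : ZMod p) : (Fin n → ℤ) →+ (Fin n → ℤ) :=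
  AddMonoidHom.id (Fin n → ℤ) - (Multiplicative.toAdd (ρ (Multiplicative.ofAdd t))).toAddMonoidHom

namespace Stmt6Aux

variable {p n : ℕ} [Fact p.Prime] {ρ : Multiplicative (ZMod p) →* Multiplicative (AddAut (Fin n → ℤ))} {t : ZMod p}

def mkE (ρ : Multiplicative (ZMod p) →* Multiplicative (AddAut (Fin n → ℤ))) (x : Fin n → ℤ) (g : ZMod p) :
    Gam p n ρ := ⟨Multiplicative.ofAdd x, Multiplicative.ofAdd g⟩

lemma mkE_mul (x x' : Fin n → ℤ) (g g' : ZMod p) :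
    mkE ρ x g * mkE ρ x' g' = mkE ρ (x + Multiplicative.toAdd (ρ (Multiplicative.ofAdd g)) x') (g + g') := rfl

lemma one_eq : (1 : Gam p n ρ) = mkE ρ 0 0 := rfl

lemma zmod_addOrderOf {b : ZMod p} (hb : b ≠ 0) : addOrderOf b = p := by
  have hp : p.Prime := Fact.out
  have h0 : p • b = 0 := by
    rw [nsmul_eq_mul, ZMod.natCast_self, zero_mul]
  have hdvd : addOrderOf b ∣ p := addOrderOf_dvd_iff_nsmul_eq_zero.mpr h0
  rcases hp.eq_one_or_self_of_dvd _ hdvd with h | h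
  · exact absurd (AddMonoid.addOrderOf_eq_one_iff.mp h) hb
  · exact h

lemma norm_apply (x : Fin n → ℤ) :
    gammaNormHom p n ρ t x = ∑ i ∈ Finset.range p, Multiplicative.toAdd (ρ (Multiplicative.ofAdd t) ^ i) x := by
  simp [gammaNormHom]

lemma oneSub_apply (y : Fin n → ℤ) :
    oneSubHom p n ρ t y = y - Multiplicative.toAdd (ρ (Multiplicative.ofAdd t)) y := rfl

lemma mkE_pow (x : Fin n → ℤ) (k : ℕ) :
    (mkE ρ x t) ^ k
      = mkE ρ (∑ i ∈ Finset.range k, Multiplicative.toAdd (ρ (Multiplicative.ofAdd t) ^ i) x) (k • t) := by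
  induction k with
  | zero => simp [one_eq]
  | succ k ih =>
    rw [pow_succ, ih, mkE_mul]
    congr 1
    · rw [Finset.sum_range_succ]
      congr 1
      rw [ofAdd_nsmul, map_pow]
    · rw [succ_nsmul]

lemma mkE_pow_p {x : Fin n → ℤ} (hx : x ∈ (gammaNormHom p n ρ t).ker) :
    (mkE ρ x t) ^ p = 1 := by
  rw [mkE_pow, one_eq]
  congr 1
  · rw [← norm_apply]; exact hx
  · rw [nsmul_eq_mul, ZMod.natCast_self, zero_mul]

lemma mkE_ne_one (ht : t ≠ 0) (x : Fin n → ℤ) : mkE ρ x t ≠ 1 := by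
  intro h
  exact ht (by simpa [mkE] using congrArg (fun z : Gam p n ρ => z.right.toAdd) h)

lemma orderOf_mkE (ht : t ≠ 0) {x : Fin n → ℤ} (hx : x ∈ (gammaNormHom p n ρ t).ker) :
    orderOf (mkE ρ x t) = p :=
  orderOf_eq_prime (mkE_pow_p hx) (mkE_ne_one ht x)

lemma card_zpowers_mkE (ht : t ≠ 0) {x : Fin n → ℤ} (hx : x ∈ (gammaNormHom p n ρ t).ker) :
    Nat.card (Subgroup.zpowers (mkE ρ x t)) = p := by
  rw [Nat.card_zpowers, orderOf_mkE ht hx]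

lemma sub_mem_range (ht : t ≠ 0) (g : Multiplicative (ZMod p)) (x : Fin n → ℤ) :
    Multiplicative.toAdd (ρ g) x - x ∈ (oneSubHom p n ρ t).range := by
  haveI : NeZero p := ⟨(Fact.out : p.Prime).ne_zero⟩
  set k := (g.toAdd * t⁻¹).val with hk
  have hg : (Multiplicative.ofAdd t) ^ k = g := by
    rw [← ofAdd_nsmul]
    have : k • t = g.toAdd := by
      rw [nsmul_eq_mul, hk, ZMod.natCast_val, ZMod.cast_id, mul_assoc,
        inv_mul_cancel₀ ht, mul_one]
    rw [this, ofAdd_toAdd]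
  rw [← hg, map_pow]
  have hsum : Multiplicative.toAdd (ρ (Multiplicative.ofAdd t) ^ k) x - x
      = ∑ i ∈ Finset.range k,
          (Multiplicative.toAdd (ρ (Multiplicative.ofAdd t) ^ (i + 1)) x - Multiplicative.toAdd (ρ (Multiplicative.ofAdd t) ^ i) x) := by
    rw [Finset.sum_range_sub (fun i => Multiplicative.toAdd (ρ (Multiplicative.ofAdd t) ^ i) x)]
    simp
  rw [hsum]
  apply AddSubgroup.sum_mem
  intro i _
  refine ⟨-(Multiplicative.toAdd (ρ (Multiplicative.ofAdd t) ^ i) x), ?_⟩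
  rw [oneSub_apply, map_neg, pow_succ', toAdd_mul, AddAut.add_apply]
  abel

lemma map_conj_conj {G : Type*} [Group G] (H : Subgroup G) (a b : G) :
    (H.map (MulAut.conj a).toMonoidHom).map (MulAut.conj b).toMonoidHom
      = H.map (MulAut.conj (b * a)).toMonoidHom := by
  rw [Subgroup.map_map]
  congr 1
  ext x
  simp [mul_assoc]

lemma map_conj_one {G : Type*} [Group G] (H : Subgroup G) :
    H.map (MulAut.conj (1 : G)).toMonoidHom = H := by
  ext x; simp

end Stmt6Aux

open Stmt6Aux in
/-- for a generator `t` of `ℤ/p`, the assignment `x ↦ ⟨(x,t)⟩` induces a bijection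
from `ker(Norm_t)/im(1 − ρ(t))` to the set of conjugacy classes of subgroups of order `p`
of `Γ = ℤⁿ ⋊_ρ ℤ/p`. -/
theorem stmt6 (p n : ℕ) [Fact p.Prime]
    (ρ : Multiplicative (ZMod p) →* Multiplicative (AddAut (Fin n → ℤ)))
    (t : ZMod p) (ht : AddSubgroup.zmultiples t = ⊤) :
    ∃ e : (↥(gammaNormHom p n ρ t).ker ⧸
            ((oneSubHom p n ρ t).range.addSubgroupOf (gammaNormHom p n ρ t).ker)) ≃
          Quot (fun (H K : {H : Subgroup (Gam p n ρ) // Nat.card H = p}) =>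
            ∃ γ : Gam p n ρ,
              (H : Subgroup (Gam p n ρ)).map (MulAut.conj γ).toMonoidHom = (K : Subgroup (Gam p n ρ))),
      ∀ (x : Fin n → ℤ) (hx : x ∈ (gammaNormHom p n ρ t).ker)
        (H : Subgroup (Gam p n ρ)) (hH : Nat.card H = p),
        e (QuotientAddGroup.mk ⟨x, hx⟩) = Quot.mk _ ⟨H, hH⟩ ↔
          ∃ γ : Gam p n ρ,
            (Subgroup.zpowers
                (⟨Multiplicative.ofAdd x, Multiplicative.ofAdd t⟩ : Gam p n ρ)).map
                (MulAut.conj γ).toMonoidHom = H := by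
  classical
  have hp : p.Prime := Fact.out
  haveI : NeZero p := ⟨hp.ne_zero⟩
  have tne : t ≠ 0 := by
    intro h
    rw [h, AddSubgroup.zmultiples_zero_eq_bot] at ht
    exact bot_ne_top (α := AddSubgroup (ZMod p)) ht
  set S := ((oneSubHom p n ρ t).range.addSubgroupOf (gammaNormHom p n ρ t).ker) with hSdef
  let r : {H : Subgroup (Gam p n ρ) // Nat.card H = p} →
      {H : Subgroup (Gam p n ρ) // Nat.card H = p} → Prop :=
    fun H K => ∃ γ : Gam p n ρ,
      (H : Subgroup (Gam p n ρ)).map (MulAut.conj γ).toMonoidHom = (K : Subgroup (Gam p n ρ))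
  have hequiv : Equivalence r :=
    ⟨fun H => ⟨1, map_conj_one _⟩,
     fun {H K} h => by
       obtain ⟨γ, hγ⟩ := h
       exact ⟨γ⁻¹, by rw [← hγ, map_conj_conj, inv_mul_cancel, map_conj_one]⟩,
     fun {H K L} h h' => by
       obtain ⟨γ, hγ⟩ := h
       obtain ⟨γ', hγ'⟩ := h'
       exact ⟨γ' * γ, by rw [← map_conj_conj, hγ, hγ']⟩⟩
  -- the key extraction lemma for injectivity
  have key : ∀ (a b : Fin n → ℤ), b ∈ (gammaNormHom p n ρ t).ker → ∀ γ : Gam p n ρ,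
      (Subgroup.zpowers (mkE ρ a t)).map (MulAut.conj γ).toMonoidHom
        = Subgroup.zpowers (mkE ρ b t) → b - a ∈ (oneSubHom p n ρ t).range := by
    intro a b hb γ hγ
    have h1 : (MulAut.conj γ) (mkE ρ a t) ∈ Subgroup.zpowers (mkE ρ b t) := by
      rw [← hγ]
      exact Subgroup.mem_map_of_mem _ (Subgroup.mem_zpowers _)
    obtain ⟨m, hm⟩ := Subgroup.mem_zpowers_iff.mp h1
    have hrt : m • t = t := by
      have h2 := congrArg SemidirectProduct.right hm
      have h3 : (mkE ρ b t ^ m).right = (Multiplicative.ofAdd t) ^ m :=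
        map_zpow SemidirectProduct.rightHom _ m
      rw [h3] at h2
      have h4 : ((MulAut.conj γ) (mkE ρ a t)).right = Multiplicative.ofAdd t := by
        show γ.right * Multiplicative.ofAdd t * γ.right⁻¹ = Multiplicative.ofAdd t
        rw [mul_comm γ.right, mul_assoc, mul_inv_cancel, mul_one]
      rw [h4, ← ofAdd_zsmul] at h2
      exact Multiplicative.ofAdd.injective h2
    have hdvd : (p : ℤ) ∣ m - 1 := by
      have h5 : (m - 1) • t = 0 := by
        rw [sub_zsmul, hrt, one_zsmul]; abel
      have h6 := (addOrderOf_dvd_iff_zsmul_eq_zero).mpr h5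
      rwa [zmod_addOrderOf tne] at h6
    obtain ⟨c, hc⟩ := hdvd
    have hm1 : m = 1 + (p : ℤ) * c := by linarith [hc]
    have hpow1 : (mkE ρ b t) ^ (p : ℤ) = 1 := by
      rw [zpow_natCast]; exact mkE_pow_p hb
    have hBm : mkE ρ b t ^ m = mkE ρ b t := by
      rw [hm1, zpow_add, zpow_one, zpow_mul, hpow1, one_zpow, mul_one]
    rw [hBm] at hm
    have hmul : γ * mkE ρ a t = mkE ρ b t * γ := by
      have h7 : γ * mkE ρ a t * γ⁻¹ = mkE ρ b t := hm.symm
      exact mul_inv_eq_iff_eq_mul.mp h7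
    have h9 : γ.left.toAdd + Multiplicative.toAdd (ρ γ.right) a = b + Multiplicative.toAdd (ρ (Multiplicative.ofAdd t)) γ.left.toAdd :=
      congrArg (fun z : Gam p n ρ => z.left.toAdd) hmul
    have h10 : b - a = (γ.left.toAdd - Multiplicative.toAdd (ρ (Multiplicative.ofAdd t)) γ.left.toAdd)
        + (Multiplicative.toAdd (ρ γ.right) a - a) := by
      have hb' : b = γ.left.toAdd + Multiplicative.toAdd (ρ γ.right) a - Multiplicative.toAdd (ρ (Multiplicative.ofAdd t)) γ.left.toAdd :=
        eq_sub_of_add_eq h9.symm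
      rw [hb']; abel
    rw [h10]
    exact AddSubgroup.add_mem _ ⟨γ.left.toAdd, rfl⟩ (sub_mem_range tne γ.right a)
  -- the construction lemma for well-definedness
  have con : ∀ (a b : Fin n → ℤ), b - a ∈ (oneSubHom p n ρ t).range →
      ∃ γ : Gam p n ρ, (Subgroup.zpowers (mkE ρ a t)).map (MulAut.conj γ).toMonoidHom
        = Subgroup.zpowers (mkE ρ b t) := by
    rintro a b ⟨y, hy⟩
    refine ⟨mkE ρ y 0, ?_⟩
    rw [MonoidHom.map_zpowers]
    congr 1
    have e1 : y + Multiplicative.toAdd (ρ (Multiplicative.ofAdd (0 : ZMod p))) a = b + Multiplicative.toAdd (ρ (Multiplicative.ofAdd t)) y := by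
      have h0 : Multiplicative.toAdd (ρ (Multiplicative.ofAdd (0 : ZMod p))) a = a := by
        rw [ofAdd_zero, map_one]; rfl
      rw [h0]
      rw [oneSub_apply] at hy
      exact sub_eq_sub_iff_add_eq_add.mp (hy.symm ▸ rfl : y - Multiplicative.toAdd (ρ (Multiplicative.ofAdd t)) y = b - a)
    have hmul : mkE ρ y 0 * mkE ρ a t = mkE ρ b t * mkE ρ y 0 := by
      rw [mkE_mul, mkE_mul, e1, zero_add, add_zero]
    show (MulAut.conj (mkE ρ y 0)) (mkE ρ a t) = mkE ρ b t
    rw [MulAut.conj_apply]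
    exact mul_inv_eq_iff_eq_mul.mpr hmul
  let f : ↥(gammaNormHom p n ρ t).ker → Quot r :=
    fun z => Quot.mk r ⟨Subgroup.zpowers (mkE ρ z.1 t), card_zpowers_mkE tne z.2⟩
  have wd : ∀ a b : ↥(gammaNormHom p n ρ t).ker,
      @Setoid.r _ (QuotientAddGroup.leftRel S) a b → f a = f b := by
    intro a b hab
    have h1 : -a + b ∈ S := QuotientAddGroup.leftRel_apply.mp hab
    have h2 : (b : Fin n → ℤ) - a ∈ (oneSubHom p n ρ t).range := by
      have h3 := (AddSubgroup.mem_addSubgroupOf).mp h1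
      simpa [neg_add_eq_sub] using h3
    obtain ⟨γ, hγ⟩ := con a b h2
    exact Quot.sound ⟨γ, hγ⟩
  let fbar : (↥(gammaNormHom p n ρ t).ker ⧸ S) → Quot r :=
    fun q => Quotient.liftOn' q f wd
  have hinj : Function.Injective fbar := by
    intro q1 q2
    refine Quotient.inductionOn₂' q1 q2 ?_
    intro a b hfab
    refine Quotient.sound' (QuotientAddGroup.leftRel_apply.mpr ?_)
    have hfab' : Quot.mk r ⟨Subgroup.zpowers (mkE ρ a.1 t), card_zpowers_mkE tne a.2⟩
        = Quot.mk r ⟨Subgroup.zpowers (mkE ρ b.1 t), card_zpowers_mkE tne b.2⟩ := hfab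
    obtain ⟨γ, hγ⟩ := hequiv.eqvGen_iff.mp (Quot.eqvGen_exact hfab')
    have h2 : (b : Fin n → ℤ) - a ∈ (oneSubHom p n ρ t).range := key a.1 b.1 b.2 γ hγ
    rw [AddSubgroup.mem_addSubgroupOf]
    simpa [neg_add_eq_sub] using h2
  have hsurj : Function.Surjective fbar := by
    intro q
    refine Quot.inductionOn q ?_
    rintro ⟨H, hH⟩
    haveI : Finite H := Nat.finite_of_card_ne_zero (by rw [hH]; exact hp.ne_zero)
    haveI : Nontrivial H := by
      rw [← Finite.one_lt_card_iff_nontrivial, hH]; exact hp.one_lt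
    obtain ⟨u, hu⟩ := exists_ne (1 : H)
    have hane : (u : Gam p n ρ) ≠ 1 := by
      simpa using hu
    have horder : orderOf (u : Gam p n ρ) = p := by
      have hdvd := Subgroup.orderOf_dvd_natCard H u.2
      rw [hH] at hdvd
      rcases hp.eq_one_or_self_of_dvd _ hdvd with h | h
      · exact absurd (orderOf_eq_one_iff.mp h) hane
      · exact h
    set a : Gam p n ρ := (u : Gam p n ρ) with hadef
    by_cases hb : a.right.toAdd = 0
    · exfalso
      have hright : a.right = 1 := by
        rw [← ofAdd_toAdd a.right, hb]; rfl
      have haL : a = SemidirectProduct.inl a.left := by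
        refine SemidirectProduct.ext ?_ ?_
        · simp
        · simp [hright]
      have hap : a ^ p = 1 := by
        have := pow_orderOf_eq_one a; rwa [horder] at this
      have hap2 : (SemidirectProduct.inl (a.left ^ p) : Gam p n ρ)
          = SemidirectProduct.inl (1 : Multiplicative (Fin n → ℤ)) := by
        rw [map_pow, ← haL, hap, map_one]
      have h1 : a.left ^ p = 1 := SemidirectProduct.inl_injective hap2
      have h2 : (p : ℤ) • a.left.toAdd = 0 := by
        rw [natCast_zsmul]
        have := congrArg Multiplicative.toAdd h1
        simpa using this
      have h3 : a.left.toAdd = 0 :=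
        (smul_eq_zero.mp h2).resolve_left (Int.natCast_ne_zero.mpr hp.ne_zero)
      have : a = 1 := by
        rw [haL, ← ofAdd_toAdd a.left, h3]; rfl
      rw [this, orderOf_one] at horder
      exact hp.ne_one horder.symm
    · set m := (t * (a.right.toAdd)⁻¹).val with hmdef
      have hmb : m • a.right.toAdd = t := by
        rw [nsmul_eq_mul, hmdef, ZMod.natCast_val, ZMod.cast_id, mul_assoc,
          inv_mul_cancel₀ hb, mul_one]
      set h : Gam p n ρ := a ^ m with hhdef
      have hhH : h ∈ H := pow_mem u.2 m
      have hRight : h.right = Multiplicative.ofAdd t := by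
        have h1 : (a ^ m).right = a.right ^ m := map_pow SemidirectProduct.rightHom a m
        rw [hhdef, h1, ← ofAdd_toAdd a.right, ← ofAdd_nsmul, hmb]
      have hform : h = mkE ρ h.left.toAdd t := by
        refine SemidirectProduct.ext ?_ ?_
        · simp [mkE]
        · exact hRight
      have hne1 : h ≠ 1 := by
        rw [hform]; exact mkE_ne_one tne _
      have hordh : orderOf h = p := by
        have hdvd := Subgroup.orderOf_dvd_natCard H hhH
        rw [hH] at hdvd
        rcases hp.eq_one_or_self_of_dvd _ hdvd with h' | h'
        · exact absurd (orderOf_eq_one_iff.mp h') hne1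
        · exact h'
      have hx' : h.left.toAdd ∈ (gammaNormHom p n ρ t).ker := by
        have hp1 : h ^ p = 1 := by
          have := pow_orderOf_eq_one h; rwa [hordh] at this
        rw [hform, mkE_pow] at hp1
        have h2 := congrArg (fun z : Gam p n ρ => z.left.toAdd) hp1
        rw [AddMonoidHom.mem_ker, norm_apply]
        simpa [mkE] using h2
      have hzp : Subgroup.zpowers h = H := by
        have hle : Subgroup.zpowers h ≤ H := Subgroup.zpowers_le.mpr hhH
        have hc1 : Nat.card (Subgroup.zpowers h) = p := by
          rw [Nat.card_zpowers, hordh]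
        have hcard : (H : Set (Gam p n ρ)).ncard
            ≤ (Subgroup.zpowers h : Set (Gam p n ρ)).ncard := by
          rw [← Nat.card_coe_set_eq, ← Nat.card_coe_set_eq]
          show Nat.card H ≤ Nat.card (Subgroup.zpowers h)
          rw [hc1, hH]
        exact SetLike.coe_injective
          (Set.eq_of_subset_of_ncard_le (SetLike.coe_subset_coe.mpr hle) hcard (Set.toFinite _))
      refine ⟨QuotientAddGroup.mk ⟨h.left.toAdd, hx'⟩, ?_⟩
      show Quot.mk r ⟨Subgroup.zpowers (mkE ρ h.left.toAdd t), card_zpowers_mkE tne hx'⟩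
        = Quot.mk r ⟨H, hH⟩
      refine congrArg (Quot.mk r) (Subtype.ext ?_)
      show Subgroup.zpowers (mkE ρ h.left.toAdd t) = H
      rw [← hform]
      exact hzp
  refine ⟨Equiv.ofBijective fbar ⟨hinj, hsurj⟩, ?_⟩
  intro x hx H hH
  have he : (Equiv.ofBijective fbar ⟨hinj, hsurj⟩) (QuotientAddGroup.mk ⟨x, hx⟩)
      = Quot.mk r ⟨Subgroup.zpowers (mkE ρ x t), card_zpowers_mkE tne hx⟩ := rfl
  rw [he]
  constructor
  · intro hq
    obtain ⟨γ, hγ⟩ := hequiv.eqvGen_iff.mp (Quot.eqvGen_exact hq)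
    exact ⟨γ, hγ⟩
  · rintro ⟨γ, hγ⟩
    exact Quot.sound ⟨γ, hγ⟩
end
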